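/- Let (u, B, Π) be a smooth solution of the stationary incompressible Hall-MHD equations on ℝ³ and let φ ∈ C_c^∞(ℝ³). Then the following local energy identity holds: ∫_{ℝ³} (|∇u|² + |curl B|²) φ² dx = −2 ∫_{ℝ³} φ ∇u : (u ⊗ ∇φ) dx − ∫_{ℝ³} ((u·∇)u · u) φ² dx − 2 ∫_{ℝ³} φ curl B · (∇φ × B) dx − 2 ∫_{ℝ³} φ (B × u) · (∇φ × B) dx − 2 ∫_{ℝ³} φ ((curl B) × B) · (∇φ × B) dx − ∫_{ℝ³} (∇Π · u) φ² dx, where ∇u : (u ⊗ ∇φ) := Σ_{i,j=1}^{3} (∂_j u_i)(u_i ∂_j φ). -/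

import Mathlib

open MeasureTheory Filter

noncomputable section

/-- Physical space `ℝ³`. -/
abbrev E3 : Type := EuclideanSpace ℝ (Fin 3)

/-- Partial derivative `∂ᵢ f` of a scalar function on `ℝ³`. -/
def pd (i : Fin 3) (f : E3 → ℝ) (x : E3) : ℝ :=
  fderiv ℝ f x (EuclideanSpace.single i 1)

/-- Laplacian of a scalar function on `ℝ³`. -/
def lap (f : E3 → ℝ) (x : E3) : ℝ := ∑ i, pd i (pd i f) x

/-- Gradient of a scalar function on `ℝ³`. -/
def grad (f : E3 → ℝ) (x : E3) : Fin 3 → ℝ := fun i => pd i f x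

/-- Divergence of a vector field on `ℝ³`. -/
def vdiv (u : E3 → Fin 3 → ℝ) (x : E3) : ℝ := ∑ i, pd i (fun y => u y i) x

/-- Componentwise Laplacian of a vector field on `ℝ³`. -/
def vlap (u : E3 → Fin 3 → ℝ) (x : E3) : Fin 3 → ℝ := fun i => lap (fun y => u y i) x

/-- Curl of a vector field on `ℝ³`. -/
def curl (u : E3 → Fin 3 → ℝ) (x : E3) : Fin 3 → ℝ :=
  ![pd 1 (fun y => u y 2) x - pd 2 (fun y => u y 1) x,
    pd 2 (fun y => u y 0) x - pd 0 (fun y => u y 2) x,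
    pd 0 (fun y => u y 1) x - pd 1 (fun y => u y 0) x]

/-- Cross product on `ℝ³`. -/
def cross (v w : Fin 3 → ℝ) : Fin 3 → ℝ :=
  ![v 1 * w 2 - v 2 * w 1, v 2 * w 0 - v 0 * w 2, v 0 * w 1 - v 1 * w 0]

/-- Euclidean dot product on `ℝ³`. -/
def dot3 (v w : Fin 3 → ℝ) : ℝ := ∑ i, v i * w i

/-- The convective derivative `(u·∇)v`. -/
def advect (u v : E3 → Fin 3 → ℝ) (x : E3) : Fin 3 → ℝ :=
  fun i => ∑ j, u x j * pd j (fun y => v y i) x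

/-- Euclidean norm of a vector of `ℝ³`. -/
def vnorm (v : Fin 3 → ℝ) : ℝ := Real.sqrt (∑ i, v i ^ 2)

/-- `|∇u|²`, the squared Frobenius norm of the Jacobian of a vector field. -/
def gradNormSq (u : E3 → Fin 3 → ℝ) (x : E3) : ℝ :=
  ∑ i, ∑ j, (pd j (fun y => u y i) x) ^ 2

/-- A smooth solution of the stationary incompressible Hall-MHD equations on `ℝ³`:
`-Δu + (u·∇)u + ∇Π - (curl B) × B = 0`,
`-ΔB + curl (B × u) + curl ((curl B) × B) = 0`, `div u = div B = 0`. -/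
structure IsHallMHD (u B : E3 → Fin 3 → ℝ) (P : E3 → ℝ) : Prop where
  smooth_u : ∀ i, ContDiff ℝ (⊤ : ℕ∞) fun x => u x i
  smooth_B : ∀ i, ContDiff ℝ (⊤ : ℕ∞) fun x => B x i
  smooth_P : ContDiff ℝ (⊤ : ℕ∞) P
  momentum : ∀ x i,
    -vlap u x i + advect u u x i + grad P x i - cross (curl B x) (B x) i = 0
  induction : ∀ x i,
    -vlap B x i + curl (fun y => cross (B y) (u y)) x i
      + curl (fun y => cross (curl B y) (B y)) x i = 0
  div_u : ∀ x, vdiv u x = 0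
  div_B : ∀ x, vdiv B x = 0

/-- A smooth solution of the stationary incompressible MHD equations on `ℝ³`:
`-Δu + (u·∇)u + ∇Π - (curl B) × B = 0`, `-ΔB + curl (B × u) = 0`, `div u = div B = 0`. -/
structure IsMHD (u B : E3 → Fin 3 → ℝ) (P : E3 → ℝ) : Prop where
  smooth_u : ∀ i, ContDiff ℝ (⊤ : ℕ∞) fun x => u x i
  smooth_B : ∀ i, ContDiff ℝ (⊤ : ℕ∞) fun x => B x i
  smooth_P : ContDiff ℝ (⊤ : ℕ∞) P
  momentum : ∀ x i,
    -vlap u x i + advect u u x i + grad P x i - cross (curl B x) (B x) i = 0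
  induction : ∀ x i,
    -vlap B x i + curl (fun y => cross (B y) (u y)) x i = 0
  div_u : ∀ x, vdiv u x = 0
  div_B : ∀ x, vdiv B x = 0

/-- The annulus `{x : a ≤ |x| ≤ b}` in `ℝ³`. -/
def annulus (a b : ℝ) : Set E3 := {x : E3 | a ≤ ‖x‖ ∧ ‖x‖ ≤ b}

/-- The quantity `(R^(-γ) ∫_{B(0,R)} |f|^p dx)^(1/p)`. -/
def morreyAvg (p γ : ℝ) (f : E3 → ℝ) (R : ℝ) : ℝ :=
  (R ^ (-γ) * ∫ x in Metric.closedBall (0 : E3) R, |f x| ^ p) ^ (1 / p)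

/-- The local Morrey norm `‖f‖_{M^p_γ} = sup_{R ≥ 1} (R^(-γ) ∫_{B(0,R)} |f|^p dx)^(1/p)`. -/
def MorreyNorm (p γ : ℝ) (f : E3 → ℝ) : ℝ :=
  ⨆ R : {R : ℝ // 1 ≤ R}, morreyAvg p γ f R.1

/-- Membership in the local Morrey space `M^p_γ(ℝ³)`: `f ∈ L^p_loc` and the Morrey norm
is finite. -/
def MemMorrey (p γ : ℝ) (f : E3 → ℝ) : Prop :=
  (∀ R : ℝ, IntegrableOn (fun x => |f x| ^ p) (Metric.closedBall (0 : E3) R) volume) ∧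
  BddAbove (Set.range fun R : {R : ℝ // 1 ≤ R} => morreyAvg p γ f R.1)

/-- Membership in the space `M^p_{γ,0}(ℝ³)`: `f ∈ M^p_γ` and the averaged quantity over
the annuli `{R/2 ≤ |x| ≤ R}` vanishes as `R → ∞`. -/
def MemMorrey0 (p γ : ℝ) (f : E3 → ℝ) : Prop :=
  MemMorrey p γ f ∧
  Tendsto (fun R : ℝ => (R ^ (-γ) * ∫ x in annulus (R / 2) R, |f x| ^ p) ^ (1 / p))
    atTop (nhds 0)


/-! ### Auxiliary calculus lemmas -/

theorem contDiff_pd {f : E3 → ℝ} (hf : ContDiff ℝ (⊤ : ℕ∞) f) (i : Fin 3) :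
    ContDiff ℝ (⊤ : ℕ∞) (pd i f) := by
  have h : ContDiff ℝ (⊤ : ℕ∞) (fderiv ℝ f) := hf.fderiv_right (by simp)
  exact h.clm_apply contDiff_const

theorem pd_add {f g : E3 → ℝ} {x : E3} (hf : DifferentiableAt ℝ f x)
    (hg : DifferentiableAt ℝ g x) (i : Fin 3) :
    pd i (fun y => f y + g y) x = pd i f x + pd i g x := by
  simp [pd, fderiv_fun_add hf hg]

theorem pd_sub {f g : E3 → ℝ} {x : E3} (hf : DifferentiableAt ℝ f x)
    (hg : DifferentiableAt ℝ g x) (i : Fin 3) :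
    pd i (fun y => f y - g y) x = pd i f x - pd i g x := by
  simp [pd, fderiv_fun_sub hf hg]

theorem pd_mul {f g : E3 → ℝ} {x : E3} (hf : DifferentiableAt ℝ f x)
    (hg : DifferentiableAt ℝ g x) (i : Fin 3) :
    pd i (fun y => f y * g y) x = pd i f x * g x + f x * pd i g x := by
  simp [pd, fderiv_fun_mul hf hg]; ring

theorem pd_sq {f : E3 → ℝ} {x : E3} (hf : DifferentiableAt ℝ f x) (i : Fin 3) :
    pd i (fun y => f y ^ 2) x = 2 * f x * pd i f x := by
  have h : (fun y => f y ^ 2) = fun y => f y * f y := by funext y; ring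
  rw [h, pd_mul hf hf]; ring

theorem pd_sum {g : Fin 3 → E3 → ℝ} {x : E3} (hg : ∀ k, DifferentiableAt ℝ (g k) x) (i : Fin 3) :
    pd i (fun y => ∑ k, g k y) x = ∑ k, pd i (g k) x := by
  simp [pd, fderiv_fun_sum (fun k _ => hg k)]

theorem pd_comm {f : E3 → ℝ} (hf : ContDiff ℝ (⊤ : ℕ∞) f) (x : E3) (i j : Fin 3) :
    pd i (pd j f) x = pd j (pd i f) x := by
  have h1 : ContDiff ℝ (⊤ : ℕ∞) (fderiv ℝ f) := hf.fderiv_right (by simp)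
  have hdf : Differentiable ℝ (fderiv ℝ f) := h1.differentiable (by simp)
  have key : ∀ k l : Fin 3, pd k (pd l f) x
      = fderiv ℝ (fderiv ℝ f) x (EuclideanSpace.single k 1) (EuclideanSpace.single l 1) := by
    intro k l
    have h2 : pd l f = fun y => fderiv ℝ f y (EuclideanSpace.single l 1) := rfl
    rw [pd, h2, fderiv_clm_apply (hdf x) (differentiableAt_const _)]
    simp
  rw [key, key]
  exact second_derivative_symmetric (f' := fderiv ℝ f)
    (fun y => (hf.differentiable (by simp) y).hasFDerivAt)
    ((hdf x).hasFDerivAt) _ _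

theorem integral_fderiv_single_eq_zero (g : (Fin 3 → ℝ) → ℝ) (hg : ContDiff ℝ 1 g)
    (hc : HasCompactSupport g) (i : Fin 3) :
    ∫ y : Fin 3 → ℝ, fderiv ℝ g y (Pi.single i 1) = 0 := by
  obtain ⟨R, hR0, hR⟩ : ∃ R : ℝ, 0 < R ∧ ∀ y ∈ tsupport g, ‖y‖ < R := by
    obtain ⟨R, hR⟩ := hc.isBounded.subset_ball 0
    refine ⟨max (R + 1) 1, by positivity, fun y hy => ?_⟩
    have h1 := hR hy
    rw [mem_ball_zero_iff] at h1
    have h2 := le_max_left (R + 1) 1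
    linarith
  set a : Fin 3 → ℝ := fun _ => -R with ha
  set b : Fin 3 → ℝ := fun _ => R with hb
  have hmem : ∀ y ∈ tsupport g, ∀ j, y j ∈ Set.Ioo (-R) R := fun y hy j =>
    abs_lt.mp (lt_of_le_of_lt (norm_le_pi_norm y j) (hR y hy))
  have hdg : Continuous fun y => fderiv ℝ g y (Pi.single i 1) :=
    ((hg.fderiv_right (m := 0) (by norm_num)).continuous.clm_apply continuous_const)
  have hsupp : ∀ y ∉ tsupport g, fderiv ℝ g y (Pi.single i 1) = 0 := by
    intro y hy
    have h0 : fderiv ℝ g y = 0 := by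
      by_contra h
      exact hy (support_fderiv_subset ℝ (Function.mem_support.mpr h))
    simp [h0]
  have hcs : HasCompactSupport fun y => fderiv ℝ g y (Pi.single i 1) :=
    HasCompactSupport.intro hc hsupp
  have hint : Integrable (fun y => fderiv ℝ g y (Pi.single i 1)) :=
    hdg.integrable_of_hasCompactSupport hcs
  have hab : a ≤ b := fun j => by simp only [ha, hb]; linarith
  have key := MeasureTheory.integral_divergence_of_hasFDerivAt_off_countable' a b hab
    (fun j => if j = i then g else 0)
    (fun j y => if j = i then fderiv ℝ g y else 0) ∅ Set.countable_empty
    (fun j => by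
      by_cases h : j = i
      · simpa [h] using hg.continuous.continuousOn
      · simp only [h, if_false]; exact continuousOn_const)
    (fun x _ j => by
      by_cases h : j = i
      · simpa [h] using (hg.differentiable (by norm_num) x).hasFDerivAt
      · simp only [h, if_false]; exact hasFDerivAt_const (0:ℝ) x)
    (by
      have h3 : (fun x => ∑ j, (if j = i then fderiv ℝ g x else 0) (Pi.single j 1)) =
          fun x => fderiv ℝ g x (Pi.single i 1) := by
        funext x
        rw [Finset.sum_eq_single i] <;> simp +contextual [eq_comm]
      rw [h3]
      exact hint.integrableOn)
  have hbd : ∀ (j : Fin 3) (c : ℝ), c = R ∨ c = -R → ∀ z : Fin 2 → ℝ,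
      (if j = i then g else 0) (j.insertNth c z) = 0 := by
    intro j c hcR z
    by_cases h : j = i
    · subst h
      simp only [if_true]
      by_contra hgz
      have hmemz := hmem _ (subset_tsupport g hgz) j
      rw [Fin.insertNth_apply_same] at hmemz
      rcases hcR with rfl | rfl
      · exact absurd hmemz.2 (lt_irrefl _)
      · exact absurd hmemz.1 (lt_irrefl _)
    · simp [h]
  rw [show (∫ y : Fin 3 → ℝ, fderiv ℝ g y (Pi.single i 1))
      = ∫ y in Set.Icc a b, fderiv ℝ g y (Pi.single i 1) from
    (setIntegral_eq_integral_of_forall_compl_eq_zero fun y hy => by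
      refine hsupp y fun hmem' => hy ?_
      rw [Set.mem_Icc]
      exact ⟨fun j => (hmem y hmem' j).1.le, fun j => (hmem y hmem' j).2.le⟩).symm]
  have heq : (fun y => fderiv ℝ g y (Pi.single i 1)) =
      fun y => ∑ j, (if j = i then fderiv ℝ g y else 0) (Pi.single j 1) := by
    funext y; rw [Finset.sum_eq_single i] <;> simp +contextual [eq_comm]
  calc ∫ y in Set.Icc a b, fderiv ℝ g y (Pi.single i 1)
      = ∫ y in Set.Icc a b, ∑ j, (if j = i then fderiv ℝ g y else 0) (Pi.single j 1) := by
        rw [heq]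
    _ = _ := by
        rw [key]
        refine Finset.sum_eq_zero fun j _ => ?_
        have h1 : (fun z : Fin 2 → ℝ => (if j = i then g else 0) (j.insertNth (b j) z))
            = fun _ => (0:ℝ) := by
          funext z; exact hbd j (b j) (Or.inl rfl) z
        have h2 : (fun z : Fin 2 → ℝ => (if j = i then g else 0) (j.insertNth (a j) z))
            = fun _ => (0:ℝ) := by
          funext z; exact hbd j (a j) (Or.inr rfl) z
        simp only [h1, h2, integral_zero, sub_self]

theorem integral_pd_eq_zero (f : E3 → ℝ) (hf : ContDiff ℝ (⊤ : ℕ∞) f)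
    (hc : HasCompactSupport f) (i : Fin 3) : ∫ x : E3, pd i f x = 0 := by
  set eL := EuclideanSpace.equiv (Fin 3) ℝ with heL
  set g : (Fin 3 → ℝ) → ℝ := f ∘ eL.symm with hg
  have hgc : HasCompactSupport g := hc.comp_homeomorph eL.symm.toHomeomorph
  have hgs : ContDiff ℝ 1 g := (hf.of_le (by exact_mod_cast le_top)).comp eL.symm.contDiff
  have hmp := (EuclideanSpace.volume_preserving_symm_measurableEquiv_toLp (Fin 3)).symm
  have hkey : ∀ y : Fin 3 → ℝ, pd i f ((MeasurableEquiv.toLp 2 (Fin 3 → ℝ)) y)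
      = fderiv ℝ g y (Pi.single i 1) := by
    intro y
    have h1 : fderiv ℝ g y = (fderiv ℝ f (eL.symm y)).comp
        (eL.symm : (Fin 3 → ℝ) →L[ℝ] E3) := by
      rw [hg]
      exact eL.symm.comp_right_fderiv (f := f) (x := y)
    rw [pd]
    have h2 : (MeasurableEquiv.toLp 2 (Fin 3 → ℝ)) y = eL.symm y := rfl
    rw [h2, h1]
    congr 1
  have h4 := hmp.integral_comp (MeasurableEquiv.toLp 2 (Fin 3 → ℝ)).measurableEmbedding
    (fun x => pd i f x)
  rw [← h4, MeasurableEquiv.symm_symm]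
  rw [show (fun y => pd i f ((MeasurableEquiv.toLp 2 (Fin 3 → ℝ)) y))
      = fun y => fderiv ℝ g y (Pi.single i 1) from funext hkey]
  exact integral_fderiv_single_eq_zero g hgs hgc i

theorem div_cross (F W : E3 → Fin 3 → ℝ) (hF : ∀ k, Differentiable ℝ (fun y => F y k))
    (hW : ∀ k, Differentiable ℝ (fun y => W y k)) (x : E3) :
    ∑ j, pd j (fun y => cross (F y) (W y) j) x
      = dot3 (curl F x) (W x) - dot3 (F x) (curl W x) := by
  simp only [Fin.sum_univ_three, cross, curl, dot3, Matrix.cons_val_zero, Matrix.cons_val_one,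
    Matrix.head_cons, Matrix.cons_val_two, Matrix.tail_cons]
  rw [pd_sub (((hF 1).fun_mul (hW 2)) x) (((hF 2).fun_mul (hW 1)) x),
      pd_sub (((hF 2).fun_mul (hW 0)) x) (((hF 0).fun_mul (hW 2)) x),
      pd_sub (((hF 0).fun_mul (hW 1)) x) (((hF 1).fun_mul (hW 0)) x),
      pd_mul ((hF 1) x) ((hW 2) x), pd_mul ((hF 2) x) ((hW 1) x),
      pd_mul ((hF 2) x) ((hW 0) x), pd_mul ((hF 0) x) ((hW 2) x),
      pd_mul ((hF 0) x) ((hW 1) x), pd_mul ((hF 1) x) ((hW 0) x)]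
  ring

def mhdF (u B : E3 → Fin 3 → ℝ) : E3 → Fin 3 → ℝ :=
  fun y k => curl B y k + cross (B y) (u y) k + cross (curl B y) (B y) k

def mhdW (B : E3 → Fin 3 → ℝ) (φ : E3 → ℝ) : E3 → Fin 3 → ℝ :=
  fun y k => φ y ^ 2 * B y k

def mhdH (u B : E3 → Fin 3 → ℝ) (φ : E3 → ℝ) (j : Fin 3) : E3 → ℝ :=
  fun y => φ y ^ 2 * ∑ i, pd j (fun z => u z i) y * u y i - cross (mhdF u B y) (mhdW B φ y) j

set_option maxHeartbeats 4000000 in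
/-- local energy identity for the stationary Hall-MHD equations. -/
theorem hallMHD_local_energy_identity (u B : E3 → Fin 3 → ℝ) (P : E3 → ℝ)
    (hsol : IsHallMHD u B P)
    (φ : E3 → ℝ) (hφ : ContDiff ℝ (⊤ : ℕ∞) φ) (hφc : HasCompactSupport φ) :
    ∫ x, (gradNormSq u x + vnorm (curl B x) ^ 2) * φ x ^ 2
      = -2 * (∫ x, φ x * ∑ i, ∑ j, pd j (fun y => u y i) x * (u x i * pd j φ x))
        - (∫ x, dot3 (advect u u x) (u x) * φ x ^ 2)
        - 2 * (∫ x, φ x * dot3 (curl B x) (cross (grad φ x) (B x)))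
        - 2 * (∫ x, φ x * dot3 (cross (B x) (u x)) (cross (grad φ x) (B x)))
        - 2 * (∫ x, φ x * dot3 (cross (curl B x) (B x)) (cross (grad φ x) (B x)))
        - ∫ x, dot3 (grad P x) (u x) * φ x ^ 2 := by
  obtain ⟨hu, hB, hP, hmom, hind, hdivu, hdivB⟩ := hsol
  have hud : ∀ i, Differentiable ℝ (fun y => u y i) :=
    fun i => (hu i).differentiable (by simp)
  have hBd : ∀ i, Differentiable ℝ (fun y => B y i) :=
    fun i => (hB i).differentiable (by simp)
  have hφd : Differentiable ℝ φ := hφ.differentiable (by simp)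
  have hPd : Differentiable ℝ P := hP.differentiable (by simp)
  have hduc : ∀ i j, ContDiff ℝ (⊤ : ℕ∞) (pd j (fun z => u z i)) :=
    fun i j => contDiff_pd (hu i) j
  have hdud : ∀ i j, Differentiable ℝ (pd j (fun z => u z i)) :=
    fun i j => (hduc i j).differentiable (by simp)
  have hdBc : ∀ i j, ContDiff ℝ (⊤ : ℕ∞) (pd j (fun z => B z i)) :=
    fun i j => contDiff_pd (hB i) j
  have hdBd : ∀ i j, Differentiable ℝ (pd j (fun z => B z i)) :=
    fun i j => (hdBc i j).differentiable (by simp)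
  have hddud : ∀ i j k, Differentiable ℝ (pd k (pd j (fun z => u z i))) :=
    fun i j k => ((contDiff_pd (hduc i j) k).differentiable (by simp))
  have hddBd : ∀ i j k, Differentiable ℝ (pd k (pd j (fun z => B z i))) :=
    fun i j k => ((contDiff_pd (hdBc i j) k).differentiable (by simp))
  have hdφc : ∀ j, ContDiff ℝ (⊤ : ℕ∞) (pd j φ) := fun j => contDiff_pd hφ j
  have hdφd : ∀ j, Differentiable ℝ (pd j φ) :=
    fun j => (hdφc j).differentiable (by simp)
  -- curl components
  have hcurlBc : ∀ k, ContDiff ℝ (⊤ : ℕ∞) (fun y => curl B y k) := by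
    intro k
    fin_cases k
    · simpa [curl] using ((hdBc 2 1).sub (hdBc 1 2))
    · simpa [curl] using ((hdBc 0 2).sub (hdBc 2 0))
    · simpa [curl] using ((hdBc 1 0).sub (hdBc 0 1))
  have hcurlBd : ∀ k, Differentiable ℝ (fun y => curl B y k) :=
    fun k => (hcurlBc k).differentiable (by simp)
  have hdcurlBd : ∀ k j, Differentiable ℝ (pd j (fun y => curl B y k)) :=
    fun k j => (contDiff_pd (hcurlBc k) j).differentiable (by simp)
  -- the auxiliary vector fields
  have hcrossBuc : ∀ k, ContDiff ℝ (⊤ : ℕ∞) (fun y => cross (B y) (u y) k) := by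
    intro k
    fin_cases k
    · simpa [Fin.zero_eta, Fin.mk_one, Fin.reduceFinMk, cross] using ((hB 1).mul (hu 2)).sub ((hB 2).mul (hu 1))
    · simpa [Fin.zero_eta, Fin.mk_one, Fin.reduceFinMk, cross] using ((hB 2).mul (hu 0)).sub ((hB 0).mul (hu 2))
    · simpa [Fin.zero_eta, Fin.mk_one, Fin.reduceFinMk, cross] using ((hB 0).mul (hu 1)).sub ((hB 1).mul (hu 0))
  have hcrossCBBc : ∀ k, ContDiff ℝ (⊤ : ℕ∞) (fun y => cross (curl B y) (B y) k) := by
    intro k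
    fin_cases k
    · simpa [Fin.zero_eta, Fin.mk_one, Fin.reduceFinMk, cross] using ((hcurlBc 1).mul (hB 2)).sub ((hcurlBc 2).mul (hB 1))
    · simpa [Fin.zero_eta, Fin.mk_one, Fin.reduceFinMk, cross] using ((hcurlBc 2).mul (hB 0)).sub ((hcurlBc 0).mul (hB 2))
    · simpa [Fin.zero_eta, Fin.mk_one, Fin.reduceFinMk, cross] using ((hcurlBc 0).mul (hB 1)).sub ((hcurlBc 1).mul (hB 0))
  have hFc : ∀ k, ContDiff ℝ (⊤ : ℕ∞) (fun y => (mhdF u B) y k) :=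
    fun k => ((hcurlBc k).add (hcrossBuc k)).add (hcrossCBBc k)
  have hFd : ∀ k, Differentiable ℝ (fun y => (mhdF u B) y k) :=
    fun k => (hFc k).differentiable (by simp)
  have hWc : ∀ k, ContDiff ℝ (⊤ : ℕ∞) (fun y => (mhdW B φ) y k) :=
    fun k => (hφ.pow 2).mul (hB k)
  have hWd : ∀ k, Differentiable ℝ (fun y => (mhdW B φ) y k) :=
    fun k => (hWc k).differentiable (by simp)
  -- gradient of div B vanishes
  have hgraddiv : ∀ (x : E3) (j : Fin 3),
      pd j (pd 0 (fun z => B z 0)) x + pd j (pd 1 (fun z => B z 1)) x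
        + pd j (pd 2 (fun z => B z 2)) x = 0 := by
    intro x j
    have h0 : (fun y => ∑ k, pd k (fun z => B z k) y) = fun _ => (0:ℝ) := by
      funext y; exact hdivB y
    have h1 : pd j (fun y => ∑ k, pd k (fun z => B z k) y) x
        = ∑ k, pd j (pd k (fun z => B z k)) x := pd_sum (fun k => (hdBd k k) x) j
    rw [h0] at h1
    have h2 : pd j (fun _ : E3 => (0:ℝ)) x = 0 := by simp [pd]
    rw [h2] at h1
    rw [Fin.sum_univ_three] at h1
    linarith
  -- curl curl B = -ΔB
  have hcc : ∀ (x : E3) (k : Fin 3), curl (fun y => curl B y) x k = -vlap B x k := by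
    intro x k
    have hc1 : ∀ k : Fin 3, (fun y => curl B y k) = (fun y =>
        ![pd 1 (fun z => B z 2) y - pd 2 (fun z => B z 1) y,
          pd 2 (fun z => B z 0) y - pd 0 (fun z => B z 2) y,
          pd 0 (fun z => B z 1) y - pd 1 (fun z => B z 0) y] k) := fun _ => rfl
    fin_cases k <;>
      simp only [Fin.zero_eta, Fin.mk_one, Fin.reduceFinMk, curl, vlap, lap, Fin.sum_univ_three,
        Matrix.cons_val_zero, Matrix.cons_val_one, Matrix.head_cons, Matrix.cons_val_two,
        Matrix.tail_cons, hc1] <;>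
      rw [pd_sub ((hdBd _ _) x) ((hdBd _ _) x), pd_sub ((hdBd _ _) x) ((hdBd _ _) x)]
    · linear_combination (hgraddiv x 0) + (pd_comm (hB 1) x 1 0) + (pd_comm (hB 2) x 2 0)
    · linear_combination (hgraddiv x 1) + (pd_comm (hB 2) x 2 1) + (pd_comm (hB 0) x 0 1)
    · linear_combination (hgraddiv x 2) + (pd_comm (hB 0) x 0 2) + (pd_comm (hB 1) x 1 2)
  have hcrossBud : ∀ k, Differentiable ℝ (fun y => cross (B y) (u y) k) :=
    fun k => (hcrossBuc k).differentiable (by simp)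
  have hcrossCBBd : ∀ k, Differentiable ℝ (fun y => cross (curl B y) (B y) k) :=
    fun k => (hcrossCBBc k).differentiable (by simp)
  -- curl of (mhdF u B) vanishes
  have hcurlFv : ∀ (x : E3) (k : Fin 3), curl (mhdF u B) x k = 0 := by
    intro x k
    have hcck := hcc x k
    have hindk := hind x k
    fin_cases k <;>
      · simp only [Fin.zero_eta, Fin.mk_one, Fin.reduceFinMk, mhdF, curl, cross,
          Matrix.cons_val_zero, Matrix.cons_val_one, Matrix.head_cons, Matrix.cons_val_two,
          Matrix.tail_cons] at hcck hindk ⊢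
        rw [pd_add (by fun_prop) (by fun_prop), pd_add (by fun_prop) (by fun_prop),
            pd_add (by fun_prop) (by fun_prop), pd_add (by fun_prop) (by fun_prop)]
        linarith
  -- curl of (mhdW B φ)
  have hcurlW : ∀ (x : E3) (k : Fin 3),
      curl (mhdW B φ) x k = φ x ^ 2 * curl B x k + 2 * φ x * cross (grad φ x) (B x) k := by
    intro x k
    fin_cases k <;>
      simp only [Fin.zero_eta, Fin.mk_one, Fin.reduceFinMk, curl, cross, grad,
        Matrix.cons_val_zero, Matrix.cons_val_one, Matrix.head_cons, Matrix.cons_val_two,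
        Matrix.tail_cons, mhdW] <;>
      rw [pd_mul ((hφd x).fun_pow 2) ((hBd _) x), pd_mul ((hφd x).fun_pow 2) ((hBd _) x),
          pd_sq (hφd x), pd_sq (hφd x)] <;>
      ring
  -- divergence of the kinetic flux
  have hstep1 : ∀ (x : E3),
      ∑ j, pd j (fun y => φ y ^ 2 * ∑ i, pd j (fun z => u z i) y * u y i) x
      = 2 * φ x * (∑ j, pd j φ x * (∑ i, pd j (fun z => u z i) x * u x i))
        + φ x ^ 2 * (∑ j, ∑ i, (pd j (pd j (fun z => u z i)) x * u x i
            + pd j (fun z => u z i) x * pd j (fun z => u z i) x)) := by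
    intro x
    have hj : ∀ j : Fin 3, pd j (fun y => φ y ^ 2 * ∑ i, pd j (fun z => u z i) y * u y i) x
        = 2 * φ x * pd j φ x * (∑ i, pd j (fun z => u z i) x * u x i)
          + φ x ^ 2 * (∑ i, (pd j (pd j (fun z => u z i)) x * u x i
              + pd j (fun z => u z i) x * pd j (fun z => u z i) x)) := by
      intro j
      rw [pd_mul ((hφd x).fun_pow 2)
            (DifferentiableAt.fun_sum fun i _ => ((hdud i j) x).fun_mul ((hud i) x)),
          pd_sq (hφd x), pd_sum (fun i => ((hdud i j) x).fun_mul ((hud i) x)),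
          Finset.sum_congr rfl (fun i _ => pd_mul ((hdud i j) x) ((hud i) x) j)]
    rw [Fin.sum_univ_three, hj 0, hj 1, hj 2]
    simp only [Fin.sum_univ_three]
    ring
  have hcrossFWd : ∀ j, Differentiable ℝ (fun y => cross ((mhdF u B) y) ((mhdW B φ) y) j) := by
    intro j
    fin_cases j
    · simpa [Fin.zero_eta, Fin.mk_one, Fin.reduceFinMk, cross] using ((hFd 1).fun_mul (hWd 2)).fun_sub ((hFd 2).fun_mul (hWd 1))
    · simpa [Fin.zero_eta, Fin.mk_one, Fin.reduceFinMk, cross] using ((hFd 2).fun_mul (hWd 0)).fun_sub ((hFd 0).fun_mul (hWd 2))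
    · simpa [Fin.zero_eta, Fin.mk_one, Fin.reduceFinMk, cross] using ((hFd 0).fun_mul (hWd 1)).fun_sub ((hFd 1).fun_mul (hWd 0))
  have hHsmooth : ∀ j, ContDiff ℝ (⊤ : ℕ∞) ((mhdH u B φ) j) := by
    intro j
    have h1 : ContDiff ℝ (⊤ : ℕ∞) (fun y => φ y ^ 2 * ∑ i, pd j (fun z => u z i) y * u y i) :=
      (hφ.pow 2).mul (ContDiff.sum fun i _ => (hduc i j).mul (hu i))
    have h2 : ContDiff ℝ (⊤ : ℕ∞) (fun y => cross ((mhdF u B) y) ((mhdW B φ) y) j) := by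
      fin_cases j
      · simpa [Fin.zero_eta, Fin.mk_one, Fin.reduceFinMk, cross] using ((hFc 1).mul (hWc 2)).sub ((hFc 2).mul (hWc 1))
      · simpa [Fin.zero_eta, Fin.mk_one, Fin.reduceFinMk, cross] using ((hFc 2).mul (hWc 0)).sub ((hFc 0).mul (hWc 2))
      · simpa [Fin.zero_eta, Fin.mk_one, Fin.reduceFinMk, cross] using ((hFc 0).mul (hWc 1)).sub ((hFc 1).mul (hWc 0))
    exact h1.sub h2
  have hHsupp : ∀ j, HasCompactSupport ((mhdH u B φ) j) := by
    intro j
    apply HasCompactSupport.intro hφc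
    intro y hy
    have h0 : φ y = 0 := image_eq_zero_of_notMem_tsupport hy
    fin_cases j <;> simp [mhdH, mhdW, cross, h0]
  have hpdHint : ∀ j : Fin 3, Integrable (pd j ((mhdH u B φ) j)) := by
    intro j
    refine (contDiff_pd (hHsmooth j) j).continuous.integrable_of_hasCompactSupport
      (HasCompactSupport.intro (hHsupp j) fun y hy => ?_)
    have h0 : fderiv ℝ ((mhdH u B φ) j) y = 0 := by
      by_contra h
      exact hy (support_fderiv_subset ℝ (Function.mem_support.mpr h))
    simp [pd, h0]
  have hdivHint : ∫ x, ∑ j, pd j ((mhdH u B φ) j) x = 0 := by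
    rw [integral_finset_sum _ fun j _ => hpdHint j]
    exact Finset.sum_eq_zero fun j _ => integral_pd_eq_zero ((mhdH u B φ) j) (hHsmooth j) (hHsupp j) j
  -- name the seven integrands
  set A0 : E3 → ℝ := fun x => (gradNormSq u x + vnorm (curl B x) ^ 2) * φ x ^ 2 with hA0
  set A1 : E3 → ℝ := fun x => φ x * ∑ i, ∑ j, pd j (fun y => u y i) x * (u x i * pd j φ x)
    with hA1
  set A2 : E3 → ℝ := fun x => dot3 (advect u u x) (u x) * φ x ^ 2 with hA2
  set A3 : E3 → ℝ := fun x => φ x * dot3 (curl B x) (cross (grad φ x) (B x)) with hA3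
  set A4 : E3 → ℝ := fun x => φ x * dot3 (cross (B x) (u x)) (cross (grad φ x) (B x)) with hA4
  set A5 : E3 → ℝ := fun x => φ x * dot3 (cross (curl B x) (B x)) (cross (grad φ x) (B x))
    with hA5
  set A6 : E3 → ℝ := fun x => dot3 (grad P x) (u x) * φ x ^ 2 with hA6
  -- the pointwise identity
  have hvn : ∀ x : E3, vnorm (curl B x) ^ 2
      = curl B x 0 ^ 2 + curl B x 1 ^ 2 + curl B x 2 ^ 2 := by
    intro x
    rw [vnorm, Real.sq_sqrt (Finset.sum_nonneg fun i _ => sq_nonneg _), Fin.sum_univ_three]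
  have hpoint : ∀ x : E3, ∑ j, pd j ((mhdH u B φ) j) x
      = A0 x + 2 * A1 x + A2 x + 2 * A3 x + 2 * A4 x + 2 * A5 x + A6 x := by
    intro x
    have hm : ∀ i, pd 0 (pd 0 (fun z => u z i)) x + pd 1 (pd 1 (fun z => u z i)) x
        + pd 2 (pd 2 (fun z => u z i)) x
        = advect u u x i + grad P x i - cross (curl B x) (B x) i := by
      intro i
      have h := hmom x i
      simp only [vlap, lap, Fin.sum_univ_three] at h
      linarith
    have hm0 := hm 0
    have hm1 := hm 1
    have hm2 := hm 2
    simp only [cross, grad, Matrix.cons_val_zero, Matrix.cons_val_one, Matrix.head_cons,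
      Matrix.cons_val_two, Matrix.tail_cons] at hm0 hm1 hm2
    have hsplit : ∀ j : Fin 3, pd j ((mhdH u B φ) j) x
        = pd j (fun y => φ y ^ 2 * ∑ i, pd j (fun z => u z i) y * u y i) x
          - pd j (fun y => cross ((mhdF u B) y) ((mhdW B φ) y) j) x := by
      intro j
      have hd1 : DifferentiableAt ℝ
          (fun y => φ y ^ 2 * ∑ i, pd j (fun z => u z i) y * u y i) x :=
        ((hφd x).fun_pow 2).fun_mul (DifferentiableAt.fun_sum fun i _ => ((hdud i j) x).fun_mul ((hud i) x))
      have hd2 : DifferentiableAt ℝ (fun y => cross ((mhdF u B) y) ((mhdW B φ) y) j) x := (hcrossFWd j) x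
      exact pd_sub hd1 hd2 j
    calc ∑ j, pd j ((mhdH u B φ) j) x
        = ∑ j : Fin 3, (pd j (fun y => φ y ^ 2 * ∑ i, pd j (fun z => u z i) y * u y i) x
            - pd j (fun y => cross ((mhdF u B) y) ((mhdW B φ) y) j) x) :=
          Finset.sum_congr rfl fun j _ => hsplit j
      _ = (∑ j : Fin 3, pd j (fun y => φ y ^ 2 * ∑ i, pd j (fun z => u z i) y * u y i) x)
            - ∑ j : Fin 3, pd j (fun y => cross ((mhdF u B) y) ((mhdW B φ) y) j) x :=
          Finset.sum_sub_distrib _ _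
      _ = A0 x + 2 * A1 x + A2 x + 2 * A3 x + 2 * A4 x + 2 * A5 x + A6 x := by
          rw [hstep1 x, div_cross (mhdF u B) (mhdW B φ) hFd hWd x]
          have hz : dot3 (curl (mhdF u B) x) ((mhdW B φ) x) = 0 := by
            simp [dot3, hcurlFv x]
          rw [hz, zero_sub, sub_neg_eq_add]
          simp only [dot3, Fin.sum_univ_three]
          rw [hcurlW x 0, hcurlW x 1, hcurlW x 2]
          simp only [hA0, hA1, hA2, hA3, hA4, hA5, hA6, mhdF, mhdW, dot3, cross, grad,
            gradNormSq, hvn x, Fin.sum_univ_three, Matrix.cons_val_zero, Matrix.cons_val_one,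
            Matrix.head_cons, Matrix.cons_val_two, Matrix.tail_cons]
          linear_combination hm0 * (φ x ^ 2 * u x 0) + hm1 * (φ x ^ 2 * u x 1)
            + hm2 * (φ x ^ 2 * u x 2)
  -- continuity facts
  have hφco := hφ.continuous
  have huco : ∀ i, Continuous fun y => u y i := fun i => (hu i).continuous
  have hBco : ∀ i, Continuous fun y => B y i := fun i => (hB i).continuous
  have hduco : ∀ i j, Continuous (pd j (fun z => u z i)) := fun i j => (hduc i j).continuous
  have hdφco : ∀ j, Continuous (pd j φ) := fun j => (hdφc j).continuous
  have hcurlBco : ∀ k, Continuous fun y => curl B y k := fun k => (hcurlBc k).continuous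
  have hdPco : ∀ i, Continuous (pd i P) := fun i => (contDiff_pd hP i).continuous
  have hadvco : ∀ i, Continuous fun x => advect u u x i := by
    intro i
    simp only [advect]
    exact continuous_finset_sum _ fun j _ => (huco j).mul (hduco i j)
  have hgnco : Continuous fun x => gradNormSq u x := by
    simp only [gradNormSq]
    exact continuous_finset_sum _ fun i _ => continuous_finset_sum _ fun j _ => (hduco i j).pow 2
  have hvnco : Continuous fun x => vnorm (curl B x) := by
    simp only [vnorm]
    exact Real.continuous_sqrt.comp
      (continuous_finset_sum _ fun i _ => (hcurlBco i).pow 2)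
  have hcgco : ∀ k, Continuous fun x => cross (grad φ x) (B x) k := by
    intro k
    fin_cases k
    · simpa [Fin.zero_eta, Fin.mk_one, Fin.reduceFinMk, cross, grad] using ((hdφco 1).fun_mul (hBco 2)).fun_sub ((hdφco 2).fun_mul (hBco 1))
    · simpa [Fin.zero_eta, Fin.mk_one, Fin.reduceFinMk, cross, grad] using ((hdφco 2).fun_mul (hBco 0)).fun_sub ((hdφco 0).fun_mul (hBco 2))
    · simpa [Fin.zero_eta, Fin.mk_one, Fin.reduceFinMk, cross, grad] using ((hdφco 0).fun_mul (hBco 1)).fun_sub ((hdφco 1).fun_mul (hBco 0))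
  have hcBuco : ∀ k, Continuous fun y => cross (B y) (u y) k :=
    fun k => (hcrossBuc k).continuous
  have hcCBBco : ∀ k, Continuous fun y => cross (curl B y) (B y) k :=
    fun k => (hcrossCBBc k).continuous
  -- integrability of each integrand
  have hInt : ∀ G : E3 → ℝ, Continuous G → (∀ y, φ y = 0 → G y = 0) → Integrable G :=
    fun G hc hz => hc.integrable_of_hasCompactSupport
      (HasCompactSupport.intro hφc fun y hy => hz y (image_eq_zero_of_notMem_tsupport hy))
  have iA0 : Integrable A0 :=
    hInt A0 ((hgnco.add (hvnco.pow 2)).mul (hφco.pow 2)) (fun y h0 => by simp [hA0, h0])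
  have iA1 : Integrable A1 :=
    hInt A1 (hφco.mul (continuous_finset_sum _ fun i _ => continuous_finset_sum _ fun j _ =>
      (hduco i j).mul ((huco i).mul (hdφco j)))) (fun y h0 => by simp [hA1, h0])
  have iA2 : Integrable A2 :=
    hInt A2 ((by simp only [hA2, dot3]; exact
        (continuous_finset_sum _ fun i _ => (hadvco i).mul (huco i)).mul (hφco.pow 2)))
      (fun y h0 => by simp [hA2, h0])
  have iA3 : Integrable A3 :=
    hInt A3 (hφco.mul (by simp only [dot3]; exact
        continuous_finset_sum _ fun i _ => (hcurlBco i).mul (hcgco i)))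
      (fun y h0 => by simp [hA3, h0])
  have iA4 : Integrable A4 :=
    hInt A4 (hφco.mul (by simp only [dot3]; exact
        continuous_finset_sum _ fun i _ => (hcBuco i).mul (hcgco i)))
      (fun y h0 => by simp [hA4, h0])
  have iA5 : Integrable A5 :=
    hInt A5 (hφco.mul (by simp only [dot3]; exact
        continuous_finset_sum _ fun i _ => (hcCBBco i).mul (hcgco i)))
      (fun y h0 => by simp [hA5, h0])
  have iA6 : Integrable A6 :=
    hInt A6 ((by simp only [hA6, dot3, grad]; exact
        (continuous_finset_sum _ fun i _ => (hdPco i).mul (huco i)).mul (hφco.pow 2)))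
      (fun y h0 => by simp [hA6, h0])
  have p1 : Integrable fun x => 2 * A1 x := iA1.const_mul 2
  have p3 : Integrable fun x => 2 * A3 x := iA3.const_mul 2
  have p4 : Integrable fun x => 2 * A4 x := iA4.const_mul 2
  have p5 : Integrable fun x => 2 * A5 x := iA5.const_mul 2
  have hkey : ∫ x, (A0 x + 2 * A1 x + A2 x + 2 * A3 x + 2 * A4 x + 2 * A5 x + A6 x) = 0 := by
    have e : (fun x => A0 x + 2 * A1 x + A2 x + 2 * A3 x + 2 * A4 x + 2 * A5 x + A6 x)
        = fun x => ∑ j, pd j ((mhdH u B φ) j) x := funext fun x => (hpoint x).symm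
    rw [e]
    exact hdivHint
  have q1 : Integrable (fun x => A0 x + 2 * A1 x) := iA0.add p1
  have q2 : Integrable (fun x => A0 x + 2 * A1 x + A2 x) := q1.add iA2
  have q3 : Integrable (fun x => A0 x + 2 * A1 x + A2 x + 2 * A3 x) := q2.add p3
  have q4 : Integrable (fun x => A0 x + 2 * A1 x + A2 x + 2 * A3 x + 2 * A4 x) := q3.add p4
  have q5 : Integrable (fun x => A0 x + 2 * A1 x + A2 x + 2 * A3 x + 2 * A4 x + 2 * A5 x) :=
    q4.add p5
  rw [integral_add q5 iA6, integral_add q4 p5, integral_add q3 p4, integral_add q2 p3,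
      integral_add q1 iA2, integral_add iA0 p1,
      integral_const_mul, integral_const_mul, integral_const_mul, integral_const_mul] at hkey
  linarith
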